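/- arXiv:math/0601681 — 6 statements merged into one kernel-verified Lean document; each statement's English description precedes it below -/
import Mathlib

section
/- Let n ≥ 1, let h : {1,…,n} → {0,1,…,n} be a nondecreasing function, let u be an invertible upper-triangular n×n complex matrix, and let P(σ) be the permutation matrix of a permutation σ of {1,…,n}. Then (u·P(σ))⁻¹·E_{1n}·(u·P(σ)) ∈ H_h if and only if P(σ)⁻¹·E_{1n}·P(σ) ∈ H_h. -/
open Matrix

noncomputable section

/-- The length of a permutation: its number of inversions. -/
def invLen {n : ℕ} (w : Equiv.Perm (Fin n)) : ℕ :=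
  (Finset.univ.filter (fun p : Fin n × Fin n => p.1 < p.2 ∧ w p.2 < w p.1)).card

def IsTransposition {n : ℕ} (t : Equiv.Perm (Fin n)) : Prop :=
  ∃ a b : Fin n, a ≠ b ∧ t = Equiv.swap a b

/-- `BruhatCovers w v` means `w` covers `v` in the Bruhat order:
`v = w·t` for some transposition `t` and `ℓ(v) = ℓ(w) − 1`. -/
def BruhatCovers {n : ℕ} (w v : Equiv.Perm (Fin n)) : Prop :=
  (∃ t, IsTransposition t ∧ v = w * t) ∧ invLen v + 1 = invLen w

/-- The Bruhat order: reflexive–transitive closure of the covering relation. -/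
def BruhatLE {n : ℕ} (v w : Equiv.Perm (Fin n)) : Prop :=
  Relation.ReflTransGen (fun x y => BruhatCovers y x) v w

def BruhatLT {n : ℕ} (v w : Equiv.Perm (Fin n)) : Prop :=
  BruhatLE v w ∧ v ≠ w

/-- The matrix unit `E_{kl}`. -/
def stdE (n : ℕ) (k l : Fin n) : Matrix (Fin n) (Fin n) ℂ := Matrix.single k l 1

/-- The permutation matrix of `σ`: entry `(k,l)` is `1` iff `k = σ(l)`. -/
def permMat {n : ℕ} (σ : Equiv.Perm (Fin n)) : Matrix (Fin n) (Fin n) ℂ :=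
  Matrix.of fun k l => if k = σ l then 1 else 0

/-- The Hessenberg space of a (1-based) Hessenberg function `h`:
matrices `M` with `M_{kl} = 0` whenever `k > h(l)`.  Row index `k : Fin n`
corresponds to the 1-based row `(k : ℕ) + 1`. -/
def HessSpace {n : ℕ} (h : Fin n → ℕ) : Set (Matrix (Fin n) (Fin n) ℂ) :=
  {M | ∀ k l : Fin n, h l < (k : ℕ) + 1 → M k l = 0}

/-- The span `H_{ij}` of the matrix units `E_{kl}` with `k ≤ i` and `l ≥ j`
(`i`, `j`, `k`, `l` all 1-based): matrices vanishing outside the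
upper-right `i × (n−j+1)` rectangle. -/
def Hrect (n i j : ℕ) : Set (Matrix (Fin n) (Fin n) ℂ) :=
  {M | ∀ k l : Fin n, ¬((k : ℕ) + 1 ≤ i ∧ j ≤ (l : ℕ) + 1) → M k l = 0}

/-- for a nondecreasing `h : {1,…,n} → {0,…,n}`, an invertible
upper-triangular `u` and a permutation `σ`,
`(u·P(σ))⁻¹·E_{1n}·(u·P(σ)) ∈ H_h ↔ P(σ)⁻¹·E_{1n}·P(σ) ∈ H_h`. -/
theorem stmt3 (n : ℕ) (hn : 1 ≤ n) (h : Fin n → ℕ) (hmono : Monotone h)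
    (hle : ∀ k, h k ≤ n) (u : Matrix (Fin n) (Fin n) ℂ) (hu : IsUnit u)
    (htri : ∀ k l : Fin n, l < k → u k l = 0) (σ : Equiv.Perm (Fin n)) :
    (u * permMat σ)⁻¹ * stdE n ⟨0, by omega⟩ ⟨n - 1, by omega⟩ * (u * permMat σ)
        ∈ HessSpace h ↔
      (permMat σ)⁻¹ * stdE n ⟨0, by omega⟩ ⟨n - 1, by omega⟩ * permMat σ ∈ HessSpace h := by
  
  set i0 : Fin n := ⟨0, by omega⟩ with hi0
  set i1 : Fin n := ⟨n - 1, by omega⟩ with hi1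
  set E : Matrix (Fin n) (Fin n) ℂ := Matrix.single i0 i1 (1:ℂ) with hE
  have hEeq : stdE n ⟨0, by omega⟩ ⟨n - 1, by omega⟩ = E := rfl
  have hdet : IsUnit u.det := (Matrix.isUnit_iff_isUnit_det u).mp hu
  have hinv : u⁻¹ * u = 1 := Matrix.nonsing_inv_mul u hdet
  have hinv' : u * u⁻¹ = 1 := Matrix.mul_nonsing_inv u hdet
  have hcol : ∀ k : Fin n, u⁻¹ k i0 * u i0 i0 = if k = i0 then 1 else 0 := by
    intro k
    have := congrFun (congrFun hinv k) i0
    rw [Matrix.mul_apply] at this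
    rw [Finset.sum_eq_single i0 (fun b _ hb => by
      rw [htri b i0 (lt_of_le_of_ne (by exact Fin.mk_le_mk.mpr (Nat.zero_le _)) (Ne.symm hb)),
        mul_zero]) (by simp)] at this
    rw [this, Matrix.one_apply]
  have hu00 : u⁻¹ i0 i0 * u i0 i0 = 1 := by rw [hcol i0, if_pos rfl]
  have hvne : u⁻¹ i0 i0 ≠ 0 := fun hz => by simp [hz] at hu00
  have hcolz : ∀ k : Fin n, k ≠ i0 → u⁻¹ k i0 = 0 := by
    intro k hk
    have := hcol k
    rw [if_neg hk] at this
    exact (mul_eq_zero.mp this).resolve_right (fun hz => by simp [hz] at hu00)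
  have hrow : u i1 i1 * u⁻¹ i1 i1 = 1 := by
    have := congrFun (congrFun hinv' i1) i1
    rw [Matrix.mul_apply] at this
    rw [Finset.sum_eq_single i1 (fun b _ hb => by
      rw [htri i1 b (lt_of_le_of_ne (Fin.mk_le_mk.mpr (by omega)) hb), zero_mul]) (by simp)] at this
    rw [this, Matrix.one_apply_eq]
  have hune : u i1 i1 ≠ 0 := fun hz => by simp [hz] at hrow
  set c : ℂ := u⁻¹ i0 i0 * u i1 i1 with hc
  have hcne : c ≠ 0 := mul_ne_zero hvne hune
  have sand : ∀ (A B : Matrix (Fin n) (Fin n) ℂ) (k l : Fin n),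
      (A * E * B) k l = A k i0 * B i1 l := by
    intro A B k l
    rw [Matrix.mul_apply]
    rw [Finset.sum_eq_single i1 (fun b _ hb => by
      rw [Matrix.mul_single_apply_of_ne (hbj := hb), zero_mul]) (by simp)]
    rw [Matrix.mul_single_apply_same, mul_one]
  have key : u⁻¹ * E * u = c • E := by
    ext k l
    rw [sand]
    by_cases hk : k = i0
    · by_cases hl : l = i1
      · subst hk hl
        rw [Matrix.smul_apply, hE, Matrix.single_apply_same, smul_eq_mul, mul_one]
      · have hl' : l < i1 := lt_of_le_of_ne (Fin.mk_le_mk.mpr (by omega)) hl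
        rw [htri i1 l hl', mul_zero, Matrix.smul_apply, hE,
          Matrix.single_apply_of_ne (h := fun hq => hl hq.2.symm), smul_zero]
    · rw [hcolz k hk, zero_mul, Matrix.smul_apply, hE,
        Matrix.single_apply_of_ne (h := fun hq => hk hq.1.symm), smul_zero]
  have hM : (u * permMat σ)⁻¹ * E * (u * permMat σ)
      = c • ((permMat σ)⁻¹ * E * permMat σ) := by
    rw [Matrix.mul_inv_rev]
    have h1 : (permMat σ)⁻¹ * u⁻¹ * E * (u * permMat σ)
        = (permMat σ)⁻¹ * (u⁻¹ * E * u) * permMat σ := by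
      simp only [mul_assoc]
    rw [h1, key, Matrix.mul_smul, Matrix.smul_mul]
  rw [hEeq, hM]
  constructor
  · intro hmem k l hkl
    have := hmem k l hkl
    rw [Matrix.smul_apply, smul_eq_mul, mul_eq_zero] at this
    exact this.resolve_left hcne
  · intro hmem k l hkl
    rw [Matrix.smul_apply, hmem k l hkl, smul_zero]
end
end

section
/- Let n ≥ 2 and fix i ≠ j with 1 ≤ i, j ≤ n. Let w be the permutation of {1,…,n} with w(i) = 1, w(j) = n, and whose values at the remaining positions, read in increasing order of position, are n−1, n−2, …, 2 in decreasing order. Then for every permutation s of {1,…,n}: s ≤ w in the Bruhat order if and only if s⁻¹(1) ≤ i and s⁻¹(n) ≥ j. -/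
open Matrix

noncomputable section

namespace Aux

def phi {n : ℕ} (a b : Fin n) (P : Fin n × Fin n) : Fin n × Fin n :=
  if Equiv.swap a b P.1 < Equiv.swap a b P.2 then (Equiv.swap a b P.1, Equiv.swap a b P.2) else P

set_option maxHeartbeats 1000000 in
lemma phi_injOn {n : ℕ} {a b : Fin n} (hab : a < b)
    {S : Finset (Fin n × Fin n)}
    (hS : ∀ P ∈ S, P.1 < P.2 ∧ P ≠ (a, b)) :
    Set.InjOn (phi a b) S := by
  rintro ⟨p, q⟩ hP ⟨p', q'⟩ hQ hEq
  obtain ⟨hP1, hP2⟩ := hS _ hP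
  obtain ⟨hQ1, hQ2⟩ := hS _ hQ
  simp only [ne_eq, Prod.mk.injEq, not_and] at hP2 hQ2
  simp only [phi, Equiv.swap_apply_def] at hEq
  split_ifs at hEq <;>
    simp only [Prod.mk.injEq, Fin.ext_iff, Fin.lt_def] at * <;> omega

end Aux

namespace Aux2
open Aux

lemma shape {n : ℕ} {a b p q : Fin n} (hab : a < b) (hpq : p < q)
    (hne : ¬(p = a ∧ q = b))
    (hrev : Equiv.swap a b q < Equiv.swap a b p) :
    (p = a ∧ a < q ∧ q < b) ∨ (q = b ∧ a < p ∧ p < b) := by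
  simp only [Equiv.swap_apply_def] at hrev
  split_ifs at hrev <;>
    simp only [Fin.ext_iff, Fin.lt_def, not_and] at * <;> omega

variable {n : ℕ} {a b : Fin n} (y : Equiv.Perm (Fin n))

lemma phi_memA (hab : a < b) (hasc : y a < y b) {p q : Fin n}
    (h1 : p < q) (h2 : y q < y p) :
    (phi a b (p, q)).1 < (phi a b (p, q)).2 ∧
      (y * Equiv.swap a b) (phi a b (p, q)).2 < (y * Equiv.swap a b) (phi a b (p, q)).1 ∧
      phi a b (p, q) ≠ (a, b) := by
  have key : ∀ r, (y * Equiv.swap a b) r = y (Equiv.swap a b r) := fun _ => rfl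
  by_cases h : Equiv.swap a b p < Equiv.swap a b q
  · rw [phi, if_pos h]
    refine ⟨h, ?_, ?_⟩
    · simpa only [key, Equiv.swap_apply_self] using h2
    · intro hc
      have e1 : Equiv.swap a b p = a := congrArg Prod.fst hc
      have e2 : Equiv.swap a b q = b := congrArg Prod.snd hc
      have hp : p = b := by
        rw [← Equiv.swap_apply_self a b p, e1, Equiv.swap_apply_left]
      have hq : q = a := by
        rw [← Equiv.swap_apply_self a b q, e2, Equiv.swap_apply_right]
      rw [hp, hq] at h1
      exact absurd (h1.trans hab) (lt_irrefl b)
  · rw [phi, if_neg h]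
    have hne : ¬(p = a ∧ q = b) := by
      rintro ⟨rfl, rfl⟩
      exact absurd (h2.trans hasc) (lt_irrefl _)
    have hrev : Equiv.swap a b q < Equiv.swap a b p := by
      rcases lt_or_eq_of_le (not_lt.mp h) with hx | hx
      · exact hx
      · exact absurd (Equiv.injective _ hx) (ne_of_gt h1)
    refine ⟨h1, ?_, fun hc => hne ⟨congrArg Prod.fst hc, congrArg Prod.snd hc⟩⟩
    rcases shape hab h1 hne hrev with ⟨hpa, h2a, h2b⟩ | ⟨hqb, h2a, h2b⟩
    · have hq : Equiv.swap a b q = q :=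
        Equiv.swap_apply_of_ne_of_ne (ne_of_gt h2a) (ne_of_lt h2b)
      show (y * Equiv.swap a b) q < (y * Equiv.swap a b) p
      rw [key, key, hq, hpa, Equiv.swap_apply_left]
      calc y q < y p := h2
        _ = y a := by rw [hpa]
        _ < y b := hasc
    · have hp : Equiv.swap a b p = p :=
        Equiv.swap_apply_of_ne_of_ne (ne_of_gt h2a) (ne_of_lt h2b)
      show (y * Equiv.swap a b) q < (y * Equiv.swap a b) p
      rw [key, key, hp, hqb, Equiv.swap_apply_right]
      calc y a < y b := hasc
        _ = y q := by rw [hqb]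
        _ < y p := h2

lemma phi_memB (hab : a < b) (hdesc : y b < y a)
    (hgap : ∀ c, a < c → c < b → ¬(y b < y c ∧ y c < y a)) {p q : Fin n}
    (h1 : p < q) (h2 : y q < y p) (hne : ¬(p = a ∧ q = b)) :
    (phi a b (p, q)).1 < (phi a b (p, q)).2 ∧
      (y * Equiv.swap a b) (phi a b (p, q)).2 < (y * Equiv.swap a b) (phi a b (p, q)).1 := by
  have key : ∀ r, (y * Equiv.swap a b) r = y (Equiv.swap a b r) := fun _ => rfl
  by_cases h : Equiv.swap a b p < Equiv.swap a b q
  · rw [phi, if_pos h]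
    exact ⟨h, by simpa only [key, Equiv.swap_apply_self] using h2⟩
  · rw [phi, if_neg h]
    have hrev : Equiv.swap a b q < Equiv.swap a b p := by
      rcases lt_or_eq_of_le (not_lt.mp h) with hx | hx
      · exact hx
      · exact absurd (Equiv.injective _ hx) (ne_of_gt h1)
    refine ⟨h1, ?_⟩
    rcases shape hab h1 hne hrev with ⟨hpa, h2a, h2b⟩ | ⟨hqb, h2a, h2b⟩
    · have hq : Equiv.swap a b q = q :=
        Equiv.swap_apply_of_ne_of_ne (ne_of_gt h2a) (ne_of_lt h2b)
      show (y * Equiv.swap a b) q < (y * Equiv.swap a b) p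
      rw [key, key, hq, hpa, Equiv.swap_apply_left]
      -- goal : y q < y b, knowing y q < y a (from h2, hpa), gap at q
      have h2' : y q < y a := by rw [← hpa]; exact h2
      rcases lt_or_gt_of_ne (fun hx : y q = y b => (ne_of_lt h2b) (Equiv.injective y hx)) with hlt | hgt
      · exact hlt
      · exact absurd ⟨hgt, h2'⟩ (hgap q h2a h2b)
    · have hp : Equiv.swap a b p = p :=
        Equiv.swap_apply_of_ne_of_ne (ne_of_gt h2a) (ne_of_lt h2b)
      show (y * Equiv.swap a b) q < (y * Equiv.swap a b) p
      rw [key, key, hp, hqb, Equiv.swap_apply_right]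
      -- goal : y a < y p, knowing y b < y p, gap at p
      have h2' : y b < y p := by rw [← hqb]; exact h2
      rcases lt_or_gt_of_ne (fun hx : y p = y a => (ne_of_gt h2a) (Equiv.injective y hx)) with hlt | hgt
      · exact absurd ⟨h2', hlt⟩ (hgap p h2a h2b)
      · exact hgt

end Aux2

namespace Aux3
open Aux Aux2

variable {n : ℕ} {a b : Fin n} (y : Equiv.Perm (Fin n))

def Inv {n : ℕ} (y : Equiv.Perm (Fin n)) : Finset (Fin n × Fin n) :=
  Finset.univ.filter (fun p : Fin n × Fin n => p.1 < p.2 ∧ y p.2 < y p.1)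

lemma invLen_eq : invLen y = (Inv y).card := rfl

lemma mem_Inv {P : Fin n × Fin n} : P ∈ Inv y ↔ P.1 < P.2 ∧ y P.2 < y P.1 := by
  simp [Inv]

lemma lemA (hab : a < b) (hasc : y a < y b) :
    invLen y + 1 ≤ invLen (y * Equiv.swap a b) := by
  have hmem : (a, b) ∈ Inv (y * Equiv.swap a b) := by
    rw [mem_Inv]
    refine ⟨hab, ?_⟩
    have e1 : (y * Equiv.swap a b) b = y a := by
      show y (Equiv.swap a b b) = y a; rw [Equiv.swap_apply_right]
    have e2 : (y * Equiv.swap a b) a = y b := by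
      show y (Equiv.swap a b a) = y b; rw [Equiv.swap_apply_left]
    rw [e1, e2]; exact hasc
  have hcard : (Inv y).card ≤ ((Inv (y * Equiv.swap a b)).erase (a, b)).card := by
    apply Finset.card_le_card_of_injOn (phi a b)
    · rintro ⟨p, q⟩ hP
      rw [Finset.mem_coe, mem_Inv] at hP
      obtain ⟨m1, m2, m3⟩ := phi_memA y hab hasc hP.1 hP.2
      rw [Finset.mem_coe, Finset.mem_erase, mem_Inv]
      exact ⟨m3, m1, m2⟩
    · apply phi_injOn hab
      intro P hP
      rw [mem_Inv] at hP
      refine ⟨hP.1, ?_⟩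
      rintro rfl
      exact absurd (hP.2.trans hasc) (lt_irrefl _)
  rw [Finset.card_erase_of_mem hmem] at hcard
  have hpos : 1 ≤ (Inv (y * Equiv.swap a b)).card := Finset.card_pos.mpr ⟨_, hmem⟩
  rw [invLen_eq, invLen_eq]
  omega

lemma lemB' (hab : a < b) (hdesc : y b < y a)
    (hgap : ∀ c, a < c → c < b → ¬(y b < y c ∧ y c < y a)) :
    invLen y ≤ invLen (y * Equiv.swap a b) + 1 := by
  have hcard : ((Inv y).erase (a, b)).card ≤ (Inv (y * Equiv.swap a b)).card := by
    apply Finset.card_le_card_of_injOn (phi a b)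
    · rintro ⟨p, q⟩ hP
      rw [Finset.mem_coe, Finset.mem_erase, mem_Inv] at hP
      obtain ⟨hne, h1, h2⟩ := hP
      have hne' : ¬(p = a ∧ q = b) := by
        rintro ⟨rfl, rfl⟩; exact hne rfl
      obtain ⟨m1, m2⟩ := phi_memB y hab hdesc hgap h1 h2 hne'
      rw [Finset.mem_coe, mem_Inv]
      exact ⟨m1, m2⟩
    · apply phi_injOn hab
      intro P hP
      rw [Finset.mem_erase, mem_Inv] at hP
      exact ⟨hP.2.1, hP.1⟩
  have := Finset.card_erase_of_mem (s := Inv y) (a := ((a : Fin n), b))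
  by_cases hmem : ((a : Fin n), b) ∈ Inv y
  · rw [Finset.card_erase_of_mem hmem] at hcard
    rw [invLen_eq, invLen_eq]
    omega
  · rw [Finset.erase_eq_of_notMem hmem] at hcard
    rw [invLen_eq, invLen_eq]
    omega

/-- the exact cover condition -/
lemma lemCover (s : Equiv.Perm (Fin n)) (hab : a < b) (hasc : s a < s b)
    (hgap : ∀ c, a < c → c < b → ¬(s a < s c ∧ s c < s b)) :
    invLen (s * Equiv.swap a b) = invLen s + 1 := by
  have h1 := lemA s hab hasc
  set x := s * Equiv.swap a b with hx
  have e1 : x b = s a := by rw [hx]; show s (Equiv.swap a b b) = s a; rw [Equiv.swap_apply_right]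
  have e2 : x a = s b := by rw [hx]; show s (Equiv.swap a b a) = s b; rw [Equiv.swap_apply_left]
  have hxs : x * Equiv.swap a b = s := by
    rw [hx, mul_assoc, Equiv.swap_mul_self, mul_one]
  have h2 : invLen x ≤ invLen s + 1 := by
    have := lemB' x hab (by rw [e1, e2]; exact hasc) ?_
    · rwa [hxs] at this
    · intro c hc1 hc2
      rw [e1, e2]
      have : x c = s c := by
        rw [hx]; show s (Equiv.swap a b c) = s c
        rw [Equiv.swap_apply_of_ne_of_ne (ne_of_gt hc1) (ne_of_lt hc2)]
      rw [this]
      exact hgap c hc1 hc2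
  omega

end Aux3

namespace Aux4
open Aux3

variable {n : ℕ}

lemma descent_of_cover {y x : Equiv.Perm (Fin n)} (h : BruhatCovers y x) :
    ∃ a b : Fin n, a < b ∧ y b < y a ∧ x = y * Equiv.swap a b := by
  obtain ⟨⟨t, ⟨a, b, hne, rfl⟩, rfl⟩, hlen⟩ := h
  have key : ∀ a b : Fin n, a < b →
      y b < y a ∨ ¬(invLen (y * Equiv.swap a b) + 1 = invLen y) := by
    intro a b hab
    rcases lt_trichotomy (y a) (y b) with hlt | heq | hgt
    · right
      have := lemA y hab hlt
      omega
    · exact absurd (Equiv.injective y heq) (ne_of_lt hab)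
    · left; exact hgt
  rcases lt_trichotomy a b with hab | hab | hab
  · rcases key a b hab with hd | hbad
    · exact ⟨a, b, hab, hd, rfl⟩
    · exact absurd hlen hbad
  · exact absurd hab hne
  · rw [Equiv.swap_comm] at hlen ⊢
    rcases key b a hab with hd | hbad
    · exact ⟨b, a, hab, hd, rfl⟩
    · exact absurd hlen hbad

lemma inv_swap_apply {y : Equiv.Perm (Fin n)} (a b : Fin n) (v : Fin n) :
    (y * Equiv.swap a b)⁻¹ v = Equiv.swap a b (y⁻¹ v) := by
  rw [_root_.mul_inv_rev, Equiv.swap_inv]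
  rfl

lemma F1 {y x : Equiv.Perm (Fin n)} (h0 : 0 < n) (h : BruhatCovers y x) :
    x⁻¹ ⟨0, h0⟩ ≤ y⁻¹ ⟨0, h0⟩ := by
  obtain ⟨a, b, hab, hdesc, rfl⟩ := descent_of_cover h
  rw [inv_swap_apply]
  set p := y⁻¹ (⟨0, h0⟩ : Fin n) with hp
  have hyp : y p = ⟨0, h0⟩ := Equiv.apply_symm_apply y _
  rcases eq_or_ne p a with rfl | hpa
  · exfalso
    rw [hyp] at hdesc
    exact absurd hdesc (by simp [Fin.lt_def])
  · rcases eq_or_ne p b with rfl | hpb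
    · rw [Equiv.swap_apply_right]
      exact le_of_lt hab
    · rw [Equiv.swap_apply_of_ne_of_ne hpa hpb]

lemma F2 {y x : Equiv.Perm (Fin n)} {m : Fin n} (hm : (m : ℕ) = n - 1) (h : BruhatCovers y x) :
    y⁻¹ m ≤ x⁻¹ m := by
  obtain ⟨a, b, hab, hdesc, rfl⟩ := descent_of_cover h
  rw [inv_swap_apply]
  set p := y⁻¹ m with hp
  have hyp : y p = m := Equiv.apply_symm_apply y _
  rcases eq_or_ne p b with rfl | hpb
  · exfalso
    rw [hyp] at hdesc
    have := (y a).isLt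
    simp only [Fin.lt_def] at hdesc
    omega
  · rcases eq_or_ne p a with rfl | hpa
    · rw [Equiv.swap_apply_left]
      exact le_of_lt hab
    · rw [Equiv.swap_apply_of_ne_of_ne hpa hpb]

end Aux4


namespace Aux5

variable {n : ℕ}

lemma count_eq (hn : 2 ≤ n) {I J : Fin n} (σ : Equiv.Perm (Fin n))
    {z m : Fin n} (hz : (z : ℕ) = 0) (hm : (m : ℕ) = n - 1)
    (hI : σ I = z) (hJ : σ J = m)
    (hmono : ∀ p q : Fin n, p ≠ I → p ≠ J → q ≠ I → q ≠ J → p < q → σ q < σ p)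
    (x : Fin n) (hxI : x ≠ I) (hxJ : x ≠ J) :
    (σ x : ℕ) = (Finset.univ.filter (fun y : Fin n => y ≠ I ∧ y ≠ J ∧ x ≤ y)).card := by
  have hσxI : σ x ≠ z := fun h => hxI (σ.injective (h.trans hI.symm))
  have hσxJ : σ x ≠ m := fun h => hxJ (σ.injective (h.trans hJ.symm))
  have hx1 : 1 ≤ (σ x : ℕ) := by
    have : (σ x : ℕ) ≠ 0 := fun h => hσxI (Fin.ext (h.trans hz.symm))
    omega
  have hxn : (σ x : ℕ) < n - 1 := by
    have h1 := (σ x).isLt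
    have : (σ x : ℕ) ≠ n - 1 := fun h => hσxJ (Fin.ext (h.trans hm.symm))
    omega
  have hIcc : (Finset.Icc 1 ((σ x : ℕ))).card = (σ x : ℕ) := by
    rw [Nat.card_Icc]; omega
  rw [← hIcc]
  symm
  apply Finset.card_bij (fun y _ => (σ y : ℕ))
  · intro y hy
    simp only [Finset.mem_filter, Finset.mem_univ, true_and] at hy
    obtain ⟨hyI, hyJ, hxy⟩ := hy
    rw [Finset.mem_Icc]
    constructor
    · have : σ y ≠ z := fun h => hyI (σ.injective (h.trans hI.symm))
      have : (σ y : ℕ) ≠ 0 := fun h => this (Fin.ext (h.trans hz.symm))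
      omega
    · rcases eq_or_lt_of_le hxy with rfl | hlt
      · exact le_refl _
      · exact le_of_lt (hmono x y hxI hxJ hyI hyJ hlt)
  · intro y1 h1 y2 h2 he
    exact σ.injective (Fin.ext he)
  · intro v hv
    rw [Finset.mem_Icc] at hv
    have hvn : v < n := by omega
    refine ⟨σ⁻¹ ⟨v, hvn⟩, ?_, ?_⟩
    · simp only [Finset.mem_filter, Finset.mem_univ, true_and]
      have hval : σ (σ⁻¹ ⟨v, hvn⟩) = ⟨v, hvn⟩ := Equiv.apply_symm_apply σ _
      have hyI : σ⁻¹ ⟨v, hvn⟩ ≠ I := by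
        intro h
        rw [h, hI] at hval
        have := congrArg Fin.val hval
        simp only [hz] at this
        omega
      have hyJ : σ⁻¹ ⟨v, hvn⟩ ≠ J := by
        intro h
        rw [h, hJ] at hval
        have := congrArg Fin.val hval
        simp only [hm] at this
        omega
      refine ⟨hyI, hyJ, ?_⟩
      by_contra hlt
      push_neg at hlt
      have := hmono _ x hyI hyJ hxI hxJ hlt
      rw [hval] at this
      simp only [Fin.lt_def] at this
      omega
    · simp [Equiv.apply_symm_apply]
  
lemma unique_perm (hn : 2 ≤ n) {I J : Fin n} (hIJ : I ≠ J) (σ τ : Equiv.Perm (Fin n))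
    {z m : Fin n} (hz : (z : ℕ) = 0) (hm : (m : ℕ) = n - 1)
    (hIσ : σ I = z) (hJσ : σ J = m)
    (hmonoσ : ∀ p q : Fin n, p ≠ I → p ≠ J → q ≠ I → q ≠ J → p < q → σ q < σ p)
    (hIτ : τ I = z) (hJτ : τ J = m)
    (hmonoτ : ∀ p q : Fin n, p ≠ I → p ≠ J → q ≠ I → q ≠ J → p < q → τ q < τ p) :
    σ = τ := by
  apply Equiv.ext
  intro x
  rcases eq_or_ne x I with rfl | hxI
  · rw [hIσ, hIτ]
  rcases eq_or_ne x J with rfl | hxJ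
  · rw [hJσ, hJτ]
  apply Fin.ext
  rw [count_eq hn σ hz hm hIσ hJσ hmonoσ x hxI hxJ,
    count_eq hn τ hz hm hIτ hJτ hmonoτ x hxI hxJ]

end Aux5

namespace Aux6
open Aux5

variable {n : ℕ}

variable {n : ℕ}

lemma inv_swap_apply {y : Equiv.Perm (Fin n)} (a b : Fin n) (v : Fin n) :
    (y * Equiv.swap a b)⁻¹ v = Equiv.swap a b (y⁻¹ v) := by
  rw [_root_.mul_inv_rev, Equiv.swap_inv]; rfl

lemma step (hn : 2 ≤ n) {I J : Fin n} (hIJ : I ≠ J) (w s : Equiv.Perm (Fin n))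
    {z m : Fin n} (hz : (z : ℕ) = 0) (hm : (m : ℕ) = n - 1)
    (hwI : w I = z) (hwJ : w J = m)
    (hwdec : ∀ p q : Fin n, p ≠ I → p ≠ J → q ≠ I → q ≠ J → p < q → w q < w p)
    (h1 : s⁻¹ z ≤ I) (h2 : J ≤ s⁻¹ m) (hne : s ≠ w) :
    ∃ a b : Fin n, a < b ∧ s a < s b ∧
      (∀ c, a < c → c < b → ¬(s a < s c ∧ s c < s b)) ∧
      (s * Equiv.swap a b)⁻¹ z ≤ I ∧ J ≤ (s * Equiv.swap a b)⁻¹ m := by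
  set p := s⁻¹ z with hpdef
  set q := s⁻¹ m with hqdef
  have hsp : s p = z := Equiv.apply_symm_apply s z
  have hsq : s q = m := Equiv.apply_symm_apply s m
  have hzm : z ≠ m := by
    intro h; have := congrArg Fin.val h; omega
  have hpq : p ≠ q := by
    intro h; apply hzm; rw [← hsp, ← hsq, h]
  have zlt : ∀ v : Fin n, v ≠ z → z < v := by
    intro v hv
    have : (v : ℕ) ≠ 0 := fun h => hv (Fin.ext (by omega))
    simp only [Fin.lt_def]; omega
  have ltm : ∀ v : Fin n, v ≠ m → v < m := by
    intro v hv
    have h1 := v.isLt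
    have : (v : ℕ) ≠ n - 1 := fun h => hv (Fin.ext (by omega))
    simp only [Fin.lt_def]; omega
  have sne : ∀ v : Fin n, v ≠ p → s v ≠ z := by
    intro v hv h
    exact hv (by rw [hpdef, ← h]; exact (Equiv.symm_apply_apply s v).symm)
  have sneM : ∀ v : Fin n, v ≠ q → s v ≠ m := by
    intro v hv h
    exact hv (by rw [hqdef, ← h]; exact (Equiv.symm_apply_apply s v).symm)
  classical
  set E := Finset.univ.filter
    (fun P : Fin n × Fin n => P.1 < P.2 ∧ s P.1 < s P.2 ∧
      P.1 ≠ p ∧ P.1 ≠ q ∧ P.2 ≠ p ∧ P.2 ≠ q) with hE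
  by_cases hEne : E.Nonempty
  · obtain ⟨⟨u, v⟩, hmem, hmin⟩ :=
      E.exists_min_image (fun P : Fin n × Fin n => (P.2 : ℕ) - (P.1 : ℕ)) hEne
    simp only [hE, Finset.mem_filter, Finset.mem_univ, true_and] at hmem
    obtain ⟨huv, hsuv, hup, huq, hvp, hvq⟩ := hmem
    refine ⟨u, v, huv, hsuv, ?_, ?_, ?_⟩
    · intro c hc1 hc2 hg
      obtain ⟨g1, g2⟩ := hg
      have hcp : c ≠ p := by
        intro h; rw [h, hsp] at g1
        exact absurd g1 (not_lt_of_ge (le_of_lt (zlt _ (sne u hup))))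
      have hcq : c ≠ q := by
        intro h; rw [h, hsq] at g2
        exact absurd g2 (not_lt_of_ge (le_of_lt (ltm _ (sneM v hvq))))
      have hmemc : ((u, c) : Fin n × Fin n) ∈ E := by
        simp only [hE, Finset.mem_filter, Finset.mem_univ, true_and]
        exact ⟨hc1, g1, hup, huq, hcp, hcq⟩
      have := hmin _ hmemc
      simp only [Fin.lt_def] at hc1 hc2 huv
      simp only at this
      omega
    · rw [inv_swap_apply, ← hpdef,
        Equiv.swap_apply_of_ne_of_ne (fun h => hup h.symm) (fun h => hvp h.symm)]
      exact h1
    · rw [inv_swap_apply, ← hqdef,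
        Equiv.swap_apply_of_ne_of_ne (fun h => huq h.symm) (fun h => hvq h.symm)]
      exact h2
  · have hsdec : ∀ u v : Fin n, u ≠ p → u ≠ q → v ≠ p → v ≠ q → u < v → s v < s u := by
      intro u v hup huq hvp hvq huv
      have hnot : ((u, v) : Fin n × Fin n) ∉ E := fun h => hEne ⟨_, h⟩
      simp only [hE, Finset.mem_filter, Finset.mem_univ, true_and] at hnot
      rcases lt_trichotomy (s u) (s v) with hlt | heq | hgt
      · exact absurd ⟨huv, hlt, hup, huq, hvp, hvq⟩ hnot
      · exact absurd (s.injective heq) (ne_of_lt huv)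
      · exact hgt
    have hnotboth : ¬(p = I ∧ q = J) := by
      rintro ⟨hpI, hqJ⟩
      apply hne
      apply unique_perm hn hIJ s w hz hm
      · rw [← hpI]; exact hsp
      · rw [← hqJ]; exact hsq
      · intro a b haI haJ hbI hbJ hab
        exact hsdec a b (hpI ▸ haI) (hqJ ▸ haJ) (hpI ▸ hbI) (hqJ ▸ hbJ) hab
      · exact hwI
      · exact hwJ
      · exact hwdec
    have hcase : p < I ∨ J < q := by
      by_contra hc
      push_neg at hc
      exact hnotboth ⟨le_antisymm h1 hc.1, le_antisymm hc.2 h2⟩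
    rcases hcase with hpI | hqJ
    · -- move the minimum rightward
      have hPlt : (p : ℕ) < (I : ℕ) := hpI
      have hIlt : (I : ℕ) < n := I.isLt
      obtain ⟨b1, hb1⟩ : ∃ b1 : Fin n, (b1 : ℕ) = (p : ℕ) + 1 := ⟨⟨_, by omega⟩, rfl⟩
      by_cases hqb : q = b1
      · by_cases hJp : J ≤ p
        · refine ⟨p, q, ?_, ?_, ?_, ?_, ?_⟩
          · simp only [Fin.lt_def]; rw [hqb, hb1]; omega
          · rw [hsp, hsq]; exact zlt m (Ne.symm hzm)
          · intro c hc1 hc2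
            simp only [Fin.lt_def] at hc1 hc2
            rw [hqb, hb1] at hc2
            omega
          · rw [inv_swap_apply, ← hpdef, Equiv.swap_apply_left]
            simp only [Fin.le_def]; rw [hqb, hb1]; omega
          · rw [inv_swap_apply, ← hqdef, Equiv.swap_apply_right]
            exact hJp
        · push_neg at hJp
          have hJq : (J : ℕ) = (p : ℕ) + 1 := by
            have hJle : (J : ℕ) ≤ (q : ℕ) := h2
            have h3 : (p : ℕ) < (J : ℕ) := hJp
            have h4 : (q : ℕ) = (p : ℕ) + 1 := by rw [hqb, hb1]
            omega
          have hIge : (p : ℕ) + 2 ≤ (I : ℕ) := by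
            have : (I : ℕ) ≠ (J : ℕ) := fun h => hIJ (Fin.ext h)
            omega
          obtain ⟨b2, hb2⟩ : ∃ b2 : Fin n, (b2 : ℕ) = (p : ℕ) + 2 := ⟨⟨_, by omega⟩, rfl⟩
          have hb2p : b2 ≠ p := fun h => by have := congrArg Fin.val h; omega
          have hb2q : b2 ≠ q := fun h => by
            have := congrArg Fin.val h; rw [hb2, hqb, hb1] at this; omega
          refine ⟨p, b2, ?_, ?_, ?_, ?_, ?_⟩
          · simp only [Fin.lt_def]; omega
          · rw [hsp]; exact zlt _ (sne b2 hb2p)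
          · intro c hc1 hc2 hg
            obtain ⟨g1, g2⟩ := hg
            have hcq : c = q := by
              apply Fin.ext
              simp only [Fin.lt_def] at hc1 hc2
              rw [hqb, hb1]
              omega
            rw [hcq, hsq] at g2
            exact absurd g2 (not_lt_of_ge (le_of_lt (ltm _ (sneM b2 hb2q))))
          · rw [inv_swap_apply, ← hpdef, Equiv.swap_apply_left]
            simp only [Fin.le_def]; omega
          · rw [inv_swap_apply, ← hqdef,
              Equiv.swap_apply_of_ne_of_ne (fun h => hpq h.symm) (fun h => hb2q h.symm)]
            exact h2
      · refine ⟨p, b1, ?_, ?_, ?_, ?_, ?_⟩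
        · simp only [Fin.lt_def]; omega
        · rw [hsp]
          refine zlt _ (sne b1 (fun h => ?_))
          have := congrArg Fin.val h; omega
        · intro c hc1 hc2
          simp only [Fin.lt_def] at hc1 hc2
          omega
        · rw [inv_swap_apply, ← hpdef, Equiv.swap_apply_left]
          simp only [Fin.le_def]; omega
        · rw [inv_swap_apply, ← hqdef,
            Equiv.swap_apply_of_ne_of_ne (fun h => hpq h.symm) hqb]
          exact h2
    · -- move the maximum leftward
      have hJlt : (J : ℕ) < (q : ℕ) := hqJ
      obtain ⟨a1, ha1⟩ : ∃ a1 : Fin n, (a1 : ℕ) = (q : ℕ) - 1 :=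
        ⟨⟨_, by have := q.isLt; omega⟩, rfl⟩
      by_cases hpa : p = a1
      · by_cases hqI : q ≤ I
        · refine ⟨p, q, ?_, ?_, ?_, ?_, ?_⟩
          · simp only [Fin.lt_def]; rw [hpa, ha1]; omega
          · rw [hsp, hsq]; exact zlt m (Ne.symm hzm)
          · intro c hc1 hc2
            simp only [Fin.lt_def] at hc1 hc2
            rw [hpa, ha1] at hc1
            omega
          · rw [inv_swap_apply, ← hpdef, Equiv.swap_apply_left]
            exact hqI
          · rw [inv_swap_apply, ← hqdef, Equiv.swap_apply_right]
            simp only [Fin.le_def]; rw [hpa, ha1]; omega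
        · push_neg at hqI
          have hpI' : (p : ℕ) = (q : ℕ) - 1 := by rw [hpa, ha1]
          have hIp : (I : ℕ) = (q : ℕ) - 1 := by
            have h1' : (p : ℕ) ≤ (I : ℕ) := h1
            have h2' : (I : ℕ) < (q : ℕ) := hqI
            omega
          have hJne : (J : ℕ) ≠ (q : ℕ) - 1 := by
            intro h; exact hIJ (Fin.ext (by omega))
          have hJle : (J : ℕ) ≤ (q : ℕ) - 2 := by omega
          have hQ2 : 2 ≤ (q : ℕ) := by omega
          obtain ⟨a2, ha2⟩ : ∃ a2 : Fin n, (a2 : ℕ) = (q : ℕ) - 2 :=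
            ⟨⟨_, by have := q.isLt; omega⟩, rfl⟩
          have ha2q : a2 ≠ q := fun h => by have := congrArg Fin.val h; omega
          have ha2p : a2 ≠ p := fun h => by
            have := congrArg Fin.val h; rw [ha2, hpI'] at this; omega
          refine ⟨a2, q, ?_, ?_, ?_, ?_, ?_⟩
          · simp only [Fin.lt_def]; omega
          · rw [hsq]; exact ltm _ (sneM a2 ha2q)
          · intro c hc1 hc2 hg
            obtain ⟨g1, g2⟩ := hg
            have hcp : c = p := by
              apply Fin.ext
              simp only [Fin.lt_def] at hc1 hc2
              rw [hpI']
              omega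
            rw [hcp, hsp] at g1
            exact absurd g1 (not_lt_of_ge (le_of_lt (zlt _ (sne a2 ha2p))))
          · rw [inv_swap_apply, ← hpdef,
              Equiv.swap_apply_of_ne_of_ne (fun h => ha2p h.symm) hpq]
            exact h1
          · rw [inv_swap_apply, ← hqdef, Equiv.swap_apply_right]
            simp only [Fin.le_def]; omega
      · refine ⟨a1, q, ?_, ?_, ?_, ?_, ?_⟩
        · simp only [Fin.lt_def]; omega
        · rw [hsq]
          refine ltm _ (sneM a1 (fun h => ?_))
          have := congrArg Fin.val h; omega
        · intro c hc1 hc2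
          simp only [Fin.lt_def] at hc1 hc2
          omega
        · rw [inv_swap_apply, ← hpdef,
            Equiv.swap_apply_of_ne_of_ne hpa hpq]
          exact h1
        · rw [inv_swap_apply, ← hqdef, Equiv.swap_apply_right]
          simp only [Fin.le_def]; omega

end Aux6

namespace MainAux
open Aux Aux2 Aux3 Aux4 Aux5 Aux6

variable {n : ℕ}

lemma invLen_le (s : Equiv.Perm (Fin n)) : invLen s ≤ n * n := by
  have h := Finset.card_filter_le (Finset.univ : Finset (Fin n × Fin n))
    (fun p : Fin n × Fin n => p.1 < p.2 ∧ s p.2 < s p.1)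
  have : (Finset.univ : Finset (Fin n × Fin n)).card = n * n := by
    simp [Finset.card_univ]
  rw [this] at h
  exact h

lemma climb (hn : 2 ≤ n) {I J : Fin n} (hIJ : I ≠ J) (w : Equiv.Perm (Fin n))
    {z m : Fin n} (hz : (z : ℕ) = 0) (hm : (m : ℕ) = n - 1)
    (hwI : w I = z) (hwJ : w J = m)
    (hwdec : ∀ p q : Fin n, p ≠ I → p ≠ J → q ≠ I → q ≠ J → p < q → w q < w p) :
    ∀ k : ℕ, ∀ s : Equiv.Perm (Fin n), n * n - invLen s ≤ k →
      s⁻¹ z ≤ I → J ≤ s⁻¹ m → BruhatLE s w := by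
  intro k
  induction k with
  | zero =>
    intro s hk hs1 hs2
    rcases eq_or_ne s w with rfl | hne
    · exact Relation.ReflTransGen.refl
    · exfalso
      obtain ⟨a, b, hab, hasc, hgap, hc1, hc2⟩ :=
        step hn hIJ w s hz hm hwI hwJ hwdec hs1 hs2 hne
      have hcov := lemCover s hab hasc hgap
      have hle := invLen_le (s * Equiv.swap a b)
      omega
  | succ k ih =>
    intro s hk hs1 hs2
    rcases eq_or_ne s w with rfl | hne
    · exact Relation.ReflTransGen.refl
    · obtain ⟨a, b, hab, hasc, hgap, hc1, hc2⟩ :=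
        step hn hIJ w s hz hm hwI hwJ hwdec hs1 hs2 hne
      have hcov := lemCover s hab hasc hgap
      have hle := invLen_le (s * Equiv.swap a b)
      have hBle : BruhatLE (s * Equiv.swap a b) w := by
        apply ih _ (by omega) hc1 hc2
      have hcovers : BruhatCovers (s * Equiv.swap a b) s := by
        refine ⟨⟨Equiv.swap a b, ⟨a, b, ne_of_lt hab, rfl⟩, ?_⟩, by omega⟩
        rw [mul_assoc, Equiv.swap_mul_self, mul_one]
      exact Relation.ReflTransGen.head hcovers hBle

lemma descend (h0 : 0 < n) {z m : Fin n} (hz : (z : ℕ) = 0) (hm : (m : ℕ) = n - 1)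
    {s w : Equiv.Perm (Fin n)} (h : BruhatLE s w) :
    s⁻¹ z ≤ w⁻¹ z ∧ w⁻¹ m ≤ s⁻¹ m := by
  have hzz : z = ⟨0, h0⟩ := Fin.ext hz
  induction h with
  | refl => exact ⟨le_refl _, le_refl _⟩
  | tail hab hbc ih =>
    constructor
    · exact le_trans ih.1 (by rw [hzz]; exact F1 h0 hbc)
    · exact le_trans (F2 hm hbc) ih.2

end MainAux

set_option maxHeartbeats 2000000 in
/-- let `w` be the permutation with `w(i) = 1`, `w(j) = n`,
and remaining values `n−1, …, 2` placed in decreasing order at the remaining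
positions (this is expressed by the hypothesis `hdec`).  Then `s ≤ w` in the
Bruhat order iff `s⁻¹(1) ≤ i` and `s⁻¹(n) ≥ j`.  Everything is 1-based in the
natural-language statement; positions/values in `Fin n` are 0-based. -/
theorem stmt6 (n : ℕ) (hn : 2 ≤ n) (i j : ℕ) (hi1 : 1 ≤ i) (hin : i ≤ n)
    (hj1 : 1 ≤ j) (hjn : j ≤ n) (hij : i ≠ j) (w : Equiv.Perm (Fin n))
    (hwi : w ⟨i - 1, by omega⟩ = ⟨0, by omega⟩)
    (hwj : w ⟨j - 1, by omega⟩ = ⟨n - 1, by omega⟩)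
    (hdec : ∀ p q : Fin n, p ≠ ⟨i - 1, by omega⟩ → p ≠ ⟨j - 1, by omega⟩ →
      q ≠ ⟨i - 1, by omega⟩ → q ≠ ⟨j - 1, by omega⟩ → p < q → w q < w p) :
    ∀ s : Equiv.Perm (Fin n), BruhatLE s w ↔
      ((s⁻¹ ⟨0, by omega⟩ : Fin n) : ℕ) + 1 ≤ i ∧
        j ≤ ((s⁻¹ ⟨n - 1, by omega⟩ : Fin n) : ℕ) + 1 := by
  intro s
  have h0 : 0 < n := by omega
  have hIJ : (⟨i - 1, by omega⟩ : Fin n) ≠ ⟨j - 1, by omega⟩ := by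
    intro h
    have := congrArg Fin.val h
    simp only at this
    omega
  have hwIinv : w⁻¹ ⟨0, by omega⟩ = ⟨i - 1, by omega⟩ :=
    (Equiv.symm_apply_eq w).mpr hwi.symm
  have hwJinv : w⁻¹ ⟨n - 1, by omega⟩ = ⟨j - 1, by omega⟩ :=
    (Equiv.symm_apply_eq w).mpr hwj.symm
  constructor
  · intro h
    have hd := MainAux.descend (n := n) (s := s) (w := w) h0
      (z := (⟨0, by omega⟩ : Fin n)) (m := (⟨n - 1, by omega⟩ : Fin n)) rfl rfl h
    have ha : (s⁻¹ (⟨0, by omega⟩ : Fin n) : ℕ) ≤ i - 1 :=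
      Fin.le_def.mp (le_trans hd.1 (le_of_eq hwIinv))
    have hb : j - 1 ≤ (s⁻¹ (⟨n - 1, by omega⟩ : Fin n) : ℕ) :=
      Fin.le_def.mp (le_trans (ge_of_eq hwJinv) hd.2)
    exact ⟨by omega, by omega⟩
  · rintro ⟨c1, c2⟩
    have hs1 : s⁻¹ (⟨0, by omega⟩ : Fin n) ≤ ⟨i - 1, by omega⟩ := by
      simp only [Fin.le_def]
      omega
    have hs2 : (⟨j - 1, by omega⟩ : Fin n) ≤ s⁻¹ ⟨n - 1, by omega⟩ := by
      simp only [Fin.le_def]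
      omega
    exact MainAux.climb hn hIJ w rfl rfl hwi hwj hdec (n * n) s (by omega) hs1 hs2
end
end

section
/- Let n ≥ 2 and fix pairs (i,j) and (i′,j′) with 1 ≤ i, j, i′, j′ ≤ n, i ≠ j, and i′ ≠ j′. Let w_{ij} be the permutation of {1,…,n} with w_{ij}(i) = 1, w_{ij}(j) = n, and remaining values n−1, n−2, …, 2 placed in decreasing order at the remaining positions read left to right, and define w_{i′j′} analogously. If neither (i ≤ i′ and j ≥ j′) nor (i′ ≤ i and j′ ≥ j) holds, then w_{ij} and w_{i′j′} are incomparable in the Bruhat order. -/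
open Matrix

noncomputable section

lemma invLen_le_mul_swap {n : ℕ} (w : Equiv.Perm (Fin n)) (a b : Fin n)
    (hab : a < b) (hw : w a < w b) :
    invLen w ≤ invLen (w * Equiv.swap a b) := by
  classical
  set σ := Equiv.swap a b with hσ
  apply Finset.card_le_card_of_injOn
    (fun z => if σ z.1 < σ z.2 then (σ z.1, σ z.2) else z)
  · intro z hz
    simp only [Finset.mem_coe, Finset.mem_filter, Finset.mem_univ, true_and] at hz ⊢
    obtain ⟨hlt, hinv⟩ := hz
    by_cases h : σ z.1 < σ z.2
    · rw [if_pos h]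
      simp only [Equiv.Perm.mul_apply]
      exact ⟨h, by simpa [hσ, Equiv.swap_apply_self] using hinv⟩
    · rw [if_neg h]
      simp only [Equiv.Perm.mul_apply]
      refine ⟨hlt, ?_⟩
      rcases eq_or_ne z.1 a with h1a | h1a
      · rcases eq_or_ne z.2 b with h2b | h2b
        · exact absurd hinv (by rw [h1a, h2b]; exact not_lt.mpr hw.le)
        · have h2a : z.2 ≠ a := by rw [← h1a]; exact hlt.ne'
          rw [h1a, Equiv.swap_apply_left, Equiv.swap_apply_of_ne_of_ne h2a h2b]
          rw [h1a] at hinv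
          exact hinv.trans hw
      · rcases eq_or_ne z.1 b with h1b | h1b
        · exfalso
          apply h
          rw [h1b, Equiv.swap_apply_right]
          have h2a : z.2 ≠ a := fun hh => by
            rw [hh, h1b] at hlt; exact absurd (hab.trans hlt) (lt_irrefl a)
          have h2b : z.2 ≠ b := by rw [← h1b]; exact hlt.ne'
          rw [Equiv.swap_apply_of_ne_of_ne h2a h2b]
          exact hab.trans (h1b ▸ hlt)
        · rcases eq_or_ne z.2 a with h2a | h2a
          · exfalso
            apply h
            rw [h2a, Equiv.swap_apply_left, Equiv.swap_apply_of_ne_of_ne h1a h1b]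
            exact (h2a ▸ hlt).trans hab
          · rcases eq_or_ne z.2 b with h2b | h2b
            · rw [h2b, Equiv.swap_apply_right, Equiv.swap_apply_of_ne_of_ne h1a h1b]
              rw [h2b] at hinv
              exact hw.trans hinv
            · rw [Equiv.swap_apply_of_ne_of_ne h1a h1b,
                Equiv.swap_apply_of_ne_of_ne h2a h2b]
              exact hinv
  · intro z1 hz1 z2 hz2 hf
    simp only [Finset.mem_coe, Finset.mem_filter, Finset.mem_univ, true_and] at hz1 hz2
    simp only at hf
    by_cases h1 : σ z1.1 < σ z1.2 <;> by_cases h2 : σ z2.1 < σ z2.2 <;>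
      simp only [h1, h2, if_true, if_false] at hf
    · have := Prod.ext_iff.mp hf
      exact Prod.ext (σ.injective this.1) (σ.injective this.2)
    · exfalso
      apply h2
      have := Prod.ext_iff.mp hf
      rw [← this.1, ← this.2]
      simpa [hσ, Equiv.swap_apply_self] using hz1.1
    · exfalso
      apply h1
      have := Prod.ext_iff.mp hf
      rw [this.1, this.2]
      simpa [hσ, Equiv.swap_apply_self] using hz2.1
    · exact hf

/-- In a covering step, the covered element is `w * swap a b` with `a < b` and
`w b < w a`. -/
lemma cover_structure {n : ℕ} {w v : Equiv.Perm (Fin n)} (h : BruhatCovers w v) :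
    ∃ a b : Fin n, a < b ∧ w b < w a ∧ v = w * Equiv.swap a b := by
  obtain ⟨⟨t, ⟨a, b, hab, rfl⟩, rfl⟩, hlen⟩ := h
  rcases hab.lt_or_gt with hlt | hlt
  · refine ⟨a, b, hlt, ?_, rfl⟩
    by_contra hcon
    push_neg at hcon
    rcases hcon.lt_or_eq with h1 | h1
    · exact absurd hlen (by have := invLen_le_mul_swap w a b hlt h1; omega)
    · exact hab (w.injective h1)
  · refine ⟨b, a, hlt, ?_, by rw [Equiv.swap_comm]⟩
    by_contra hcon
    push_neg at hcon
    rcases hcon.lt_or_eq with h1 | h1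
    · rw [Equiv.swap_comm] at hlen
      exact absurd hlen (by have := invLen_le_mul_swap w b a hlt h1; omega)
    · exact hab (w.injective h1.symm)

lemma cover_bot {n : ℕ} {w v : Equiv.Perm (Fin n)} (h : BruhatCovers w v)
    (c : Fin n) (hc : ∀ y, c ≤ y) : v⁻¹ c ≤ w⁻¹ c := by
  obtain ⟨a, b, hab, hwab, rfl⟩ := cover_structure h
  have : (w * Equiv.swap a b)⁻¹ c = Equiv.swap a b (w⁻¹ c) := by
    simp [_root_.mul_inv_rev, Equiv.Perm.mul_apply]
  rw [this]
  rcases eq_or_ne (w⁻¹ c) a with ha | ha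
  · exfalso
    have : w a = c := by rw [← ha]; exact w.apply_symm_apply c
    rw [this] at hwab
    exact absurd (hc (w b)) (not_le.mpr hwab)
  · rcases eq_or_ne (w⁻¹ c) b with hb | hb
    · rw [hb, Equiv.swap_apply_right]
      exact hab.le
    · rw [Equiv.swap_apply_of_ne_of_ne ha hb]

lemma cover_top {n : ℕ} {w v : Equiv.Perm (Fin n)} (h : BruhatCovers w v)
    (c : Fin n) (hc : ∀ y, y ≤ c) : w⁻¹ c ≤ v⁻¹ c := by
  obtain ⟨a, b, hab, hwab, rfl⟩ := cover_structure h
  have : (w * Equiv.swap a b)⁻¹ c = Equiv.swap a b (w⁻¹ c) := by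
    simp [_root_.mul_inv_rev, Equiv.Perm.mul_apply]
  rw [this]
  rcases eq_or_ne (w⁻¹ c) b with hb | hb
  · exfalso
    have : w b = c := by rw [← hb]; exact w.apply_symm_apply c
    rw [this] at hwab
    exact absurd (hc (w a)) (not_le.mpr hwab)
  · rcases eq_or_ne (w⁻¹ c) a with ha | ha
    · rw [ha, Equiv.swap_apply_left]
      exact hab.le
    · rw [Equiv.swap_apply_of_ne_of_ne ha hb]

lemma le_invariant {n : ℕ} {v w : Equiv.Perm (Fin n)} (h : BruhatLE v w)
    (c d : Fin n) (hc : ∀ y, c ≤ y) (hd : ∀ y, y ≤ d) :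
    v⁻¹ c ≤ w⁻¹ c ∧ w⁻¹ d ≤ v⁻¹ d := by
  induction h with
  | refl => exact ⟨le_refl _, le_refl _⟩
  | tail _ hbc ih =>
    exact ⟨ih.1.trans (cover_bot hbc c hc), (cover_top hbc d hd).trans ih.2⟩

set_option maxHeartbeats 1000000 in
/-- with `w_{ij}` (resp. `w_{i′j′}`) the permutation sending `i ↦ 1`,
`j ↦ n` with remaining values `n−1,…,2` in decreasing order, if neither
`(i ≤ i′ ∧ j ≥ j′)` nor `(i′ ≤ i ∧ j′ ≥ j)`, then `w_{ij}` and `w_{i′j′}` are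
incomparable in the Bruhat order. -/
theorem stmt12 (n : ℕ) (hn : 2 ≤ n) (i j i' j' : ℕ)
    (hi1 : 1 ≤ i) (hin : i ≤ n) (hj1 : 1 ≤ j) (hjn : j ≤ n)
    (hi'1 : 1 ≤ i') (hi'n : i' ≤ n) (hj'1 : 1 ≤ j') (hj'n : j' ≤ n)
    (hij : i ≠ j) (hij' : i' ≠ j')
    (w : Equiv.Perm (Fin n))
    (hwi : w ⟨i - 1, by omega⟩ = ⟨0, by omega⟩)
    (hwj : w ⟨j - 1, by omega⟩ = ⟨n - 1, by omega⟩)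
    (hdec : ∀ p q : Fin n, p ≠ ⟨i - 1, by omega⟩ → p ≠ ⟨j - 1, by omega⟩ →
      q ≠ ⟨i - 1, by omega⟩ → q ≠ ⟨j - 1, by omega⟩ → p < q → w q < w p)
    (w' : Equiv.Perm (Fin n))
    (hwi' : w' ⟨i' - 1, by omega⟩ = ⟨0, by omega⟩)
    (hwj' : w' ⟨j' - 1, by omega⟩ = ⟨n - 1, by omega⟩)
    (hdec' : ∀ p q : Fin n, p ≠ ⟨i' - 1, by omega⟩ → p ≠ ⟨j' - 1, by omega⟩ →
      q ≠ ⟨i' - 1, by omega⟩ → q ≠ ⟨j' - 1, by omega⟩ → p < q → w' q < w' p)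
    (hnc1 : ¬(i ≤ i' ∧ j' ≤ j)) (hnc2 : ¬(i' ≤ i ∧ j ≤ j')) :
    ¬ BruhatLE w w' ∧ ¬ BruhatLE w' w := by
  have hc : ∀ y : Fin n, (⟨0, by omega⟩ : Fin n) ≤ y := fun y => Fin.le_def.mpr (Nat.zero_le _)
  have hd : ∀ y : Fin n, y ≤ (⟨n - 1, by omega⟩ : Fin n) := fun y =>
    Fin.le_def.mpr (by have := y.isLt; simp; omega)
  have hwinv : w⁻¹ (⟨0, by omega⟩ : Fin n) = ⟨i - 1, by omega⟩ :=
    (Equiv.symm_apply_eq w).mpr hwi.symm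
  have hwinv' : w'⁻¹ (⟨0, by omega⟩ : Fin n) = ⟨i' - 1, by omega⟩ :=
    (Equiv.symm_apply_eq w').mpr hwi'.symm
  have hwjnv : w⁻¹ (⟨n - 1, by omega⟩ : Fin n) = ⟨j - 1, by omega⟩ :=
    (Equiv.symm_apply_eq w).mpr hwj.symm
  have hwjnv' : w'⁻¹ (⟨n - 1, by omega⟩ : Fin n) = ⟨j' - 1, by omega⟩ :=
    (Equiv.symm_apply_eq w').mpr hwj'.symm
  constructor
  · intro h
    have key := le_invariant h ⟨0, by omega⟩ ⟨n - 1, by omega⟩ hc hd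
    have h1 : i - 1 ≤ i' - 1 :=
      Fin.mk_le_mk.mp ((hwinv.symm.trans_le key.1).trans_eq hwinv')
    have h2 : j' - 1 ≤ j - 1 :=
      Fin.mk_le_mk.mp ((hwjnv'.symm.trans_le key.2).trans_eq hwjnv)
    exact hnc1 ⟨by omega, by omega⟩
  · intro h
    have key := le_invariant h ⟨0, by omega⟩ ⟨n - 1, by omega⟩ hc hd
    have h1 : i' - 1 ≤ i - 1 :=
      Fin.mk_le_mk.mp ((hwinv'.symm.trans_le key.1).trans_eq hwinv)
    have h2 : j - 1 ≤ j' - 1 :=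
      Fin.mk_le_mk.mp ((hwjnv.symm.trans_le key.2).trans_eq hwjnv')
    exact hnc2 ⟨by omega, by omega⟩
end
end

section
/- Let n ≥ 1 and let X be a nilpotent n×n complex matrix. Fix i with 1 ≤ i ≤ n, and let h : {1,…,n} → {0,1,…,n} be a nondecreasing function with h(i) = i and (if i ≥ 2) h(i−1) ≤ i−1. Define h′ by h′(k) = h(k) for k ≠ i and h′(i) = i−1. Then for every invertible n×n complex matrix g: g⁻¹·X·g ∈ H_h if and only if g⁻¹·X·g ∈ H_{h′}. -/
open Matrix

noncomputable section

/-- for nilpotent `X`, a nondecreasing `h : {1,…,n} → {0,…,n}` with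
`h(i) = i` and (if `i ≥ 2`) `h(i−1) ≤ i−1`, and `h′` obtained from `h` by lowering
the value at `i` to `i−1`: for every invertible `g`,
`g⁻¹·X·g ∈ H_h ↔ g⁻¹·X·g ∈ H_{h′}`. -/
theorem stmt14 (n : ℕ) (hn : 1 ≤ n) (X : Matrix (Fin n) (Fin n) ℂ) (hX : IsNilpotent X)
    (i : ℕ) (hi1 : 1 ≤ i) (hin : i ≤ n)
    (h : Fin n → ℕ) (hmono : Monotone h) (hle : ∀ k, h k ≤ n)
    (hhi : h ⟨i - 1, by omega⟩ = i)
    (hprev : 2 ≤ i → h ⟨i - 2, by omega⟩ ≤ i - 1)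
    (h' : Fin n → ℕ)
    (hh' : ∀ k : Fin n, h' k = if k = ⟨i - 1, by omega⟩ then i - 1 else h k)
    (g : Matrix (Fin n) (Fin n) ℂ) (hg : IsUnit g) :
    g⁻¹ * X * g ∈ HessSpace h ↔ g⁻¹ * X * g ∈ HessSpace h' := by
  obtain ⟨ii, hiival⟩ : ∃ ii : Fin n, (ii : ℕ) = i - 1 := ⟨⟨i - 1, by omega⟩, rfl⟩
  have hiieq : (⟨i - 1, by omega⟩ : Fin n) = ii := Fin.ext hiival.symm
  rw [hiieq] at hhi
  have hh'2 : ∀ k : Fin n, h' k = if k = ii then i - 1 else h k := by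
    intro k; rw [hh' k, hiieq]
  clear hh'
  have hdet : IsUnit g.det := (Matrix.isUnit_iff_isUnit_det g).mp hg
  have hginv : g⁻¹ * g = 1 := Matrix.nonsing_inv_mul g hdet
  have hginv' : g * g⁻¹ = 1 := Matrix.mul_nonsing_inv g hdet
  obtain ⟨M, hMdef⟩ : ∃ M, M = g⁻¹ * X * g := ⟨_, rfl⟩
  rw [← hMdef]
  have conj : ∀ m : ℕ, M ^ m = g⁻¹ * X ^ m * g := by
    intro m
    induction m with
    | zero => rw [pow_zero, pow_zero, mul_one, hginv]
    | succ m ih =>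
      rw [pow_succ, pow_succ, ih, hMdef,
        show g⁻¹ * X ^ m * g * (g⁻¹ * X * g)
          = g⁻¹ * X ^ m * (g * g⁻¹) * (X * g) by noncomm_ring,
        hginv', mul_one]
      noncomm_ring
  constructor
  · intro hM
    have F1 : ∀ k l : Fin n, i ≤ (k : ℕ) → (l : ℕ) < i → M k l = 0 := by
      intro k l hk hl
      apply hM
      have : h l ≤ i := by
        rw [← hhi]
        exact hmono (by rw [Fin.le_def]; omega)
      omega
    have F2 : ∀ l : Fin n, (l : ℕ) + 1 < i → M ii l = 0 := by
      intro l hl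
      apply hM
      have hi2 : 2 ≤ i := by omega
      have : h l ≤ i - 1 := le_trans (hmono (by rw [Fin.le_def]; show (l:ℕ) ≤ i - 2; omega)) (hprev hi2)
      omega
    have key : ∀ m : ℕ,
        (∀ k l : Fin n, i ≤ (k : ℕ) → (l : ℕ) < i → (M ^ (m + 1)) k l = 0) ∧
        (M ^ (m + 1)) ii ii = (M ii ii) ^ (m + 1) := by
      intro m
      induction m with
      | zero => rw [pow_one, pow_one]; exact ⟨F1, rfl⟩
      | succ m ih =>
        constructor
        · intro k l hk hl
          rw [pow_succ', Matrix.mul_apply]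
          apply Finset.sum_eq_zero
          intro j _
          by_cases hj : (j : ℕ) < i
          · rw [F1 k j hk hj, zero_mul]
          · rw [ih.1 j l (by omega) hl, mul_zero]
        · rw [pow_succ', Matrix.mul_apply, Finset.sum_eq_single ii]
          · rw [ih.2]; ring
          · intro j _ hj
            by_cases hjlt : (j : ℕ) + 1 < i
            · rw [F2 j hjlt, zero_mul]
            · have hne : (j : ℕ) ≠ i - 1 := fun hc => hj (Fin.ext (by rw [hc, hiival]))
              rw [ih.1 j ii (by omega) (by omega), mul_zero]
          · intro hmem; exact absurd (Finset.mem_univ ii) hmem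
    obtain ⟨N, hN⟩ := hX
    have hMN : M ^ (N + 1) = 0 := by
      rw [conj, pow_succ, hN, zero_mul, mul_zero, zero_mul]
    have ha : M ii ii = 0 := by
      have := (key N).2
      rw [hMN] at this
      simp only [Matrix.zero_apply] at this
      exact pow_eq_zero_iff (Nat.succ_ne_zero N) |>.mp this.symm
    intro k l hkl
    rw [hh'2 l] at hkl
    by_cases hl : l = ii
    · rw [if_pos hl] at hkl
      by_cases hk : i < (k : ℕ) + 1
      · exact hM k l (by rw [hl, hhi]; exact hk)
      · have hkii : k = ii := Fin.ext (by rw [hiival]; omega)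
        rw [hl, hkii]; exact ha
    · rw [if_neg hl] at hkl
      exact hM k l hkl
  · intro hM' k l hkl
    apply hM'
    rw [hh'2 l]
    by_cases hl : l = ii
    · rw [if_pos hl]
      rw [hl, hhi] at hkl
      omega
    · rw [if_neg hl]; exact hkl
end
end

section
/- Let n ≥ 2, let X be the n×n complex matrix X = Σ_{k=1}^{n−1} E_{kk} (the diagonal matrix with entries 1,…,1,0), and let h : {1,…,n} → {1,…,n} be given by h(k) = n−1 for k ≤ n−1 and h(n) = n. Then for every invertible n×n complex matrix g, letting V_{n−1} denote the span of the first n−1 columns of g, the following holds: g⁻¹·X·g ∈ H_h if and only if exactly one of the following two conditions holds: (a) e_n ∈ V_{n−1}, or (b) V_{n−1} = span(e_1,…,e_{n−1}). In particular, conditions (a) and (b) are mutually exclusive. -/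
open Matrix

noncomputable section

/-- with `X = Σ_{k=1}^{n−1} E_{kk}` (the diagonal matrix with entries
`1,…,1,0`), `h(k) = n−1` for `k ≤ n−1` and `h(n) = n`, and `V_{n−1}` the span of the
first `n−1` columns of an invertible matrix `g`:
`g⁻¹·X·g ∈ H_h` iff exactly one of (a) `e_n ∈ V_{n−1}`, (b) `V_{n−1} = span(e_1,…,e_{n−1})`
holds; moreover (a) and (b) are mutually exclusive. -/
theorem stmt16 (n : ℕ) (hn : 2 ≤ n)
    (X : Matrix (Fin n) (Fin n) ℂ)
    (hX : X = Matrix.diagonal (fun k : Fin n => if (k : ℕ) < n - 1 then (1 : ℂ) else 0))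
    (h : Fin n → ℕ) (hh : ∀ k : Fin n, h k = if (k : ℕ) < n - 1 then n - 1 else n)
    (g : Matrix (Fin n) (Fin n) ℂ) (hg : IsUnit g)
    (V : Submodule ℂ (Fin n → ℂ))
    (hV : V = Submodule.span ℂ
      {v : Fin n → ℂ | ∃ l : Fin n, (l : ℕ) < n - 1 ∧ v = fun k => g k l}) :
    (g⁻¹ * X * g ∈ HessSpace h ↔
      Xor' ((Pi.single (⟨n - 1, by omega⟩ : Fin n) 1 : Fin n → ℂ) ∈ V)
        (V = Submodule.span ℂ
          {v : Fin n → ℂ | ∃ l : Fin n, (l : ℕ) < n - 1 ∧ v = Pi.single l 1})) ∧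
    ¬(((Pi.single (⟨n - 1, by omega⟩ : Fin n) 1 : Fin n → ℂ) ∈ V) ∧
      V = Submodule.span ℂ
        {v : Fin n → ℂ | ∃ l : Fin n, (l : ℕ) < n - 1 ∧ v = Pi.single l 1}) := by
  have hdet : IsUnit g.det := (Matrix.isUnit_iff_isUnit_det g).mp hg
  have hgg : g * g⁻¹ = 1 := Matrix.mul_nonsing_inv g hdet
  have hgg' : g⁻¹ * g = 1 := Matrix.nonsing_inv_mul g hdet
  have hn1 : n - 1 < n := by omega
  set m : Fin n := ⟨n - 1, hn1⟩ with hmdef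
  have hmv : (m : ℕ) = n - 1 := rfl
  have hlt_iff : ∀ j : Fin n, (j : ℕ) < n - 1 ↔ j ≠ m := by
    intro j
    constructor
    · intro hj hjm; rw [hjm, hmv] at hj; omega
    · intro hj
      have hjn := j.isLt
      rcases Nat.lt_or_ge (j : ℕ) (n - 1) with hc | hc
      · exact hc
      · exact absurd (Fin.ext (by rw [hmv]; omega)) hj
  -- entry formula for the conjugate
  have key : ∀ k l : Fin n, (g⁻¹ * X * g) k l
      = (1 : Matrix (Fin n) (Fin n) ℂ) k l - g⁻¹ k m * g m l := by
    intro k l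
    rw [hX, Matrix.mul_apply]
    have hterm : ∀ j : Fin n,
        (g⁻¹ * Matrix.diagonal (fun k : Fin n => if (k : ℕ) < n - 1 then (1 : ℂ) else 0)) k j * g j l
        = g⁻¹ k j * g j l - (if j = m then g⁻¹ k m * g m l else 0) := by
      intro j
      rw [Matrix.mul_diagonal]
      by_cases hj : j = m
      · subst hj
        simp [hlt_iff]
      · have : (j : ℕ) < n - 1 := (hlt_iff j).mpr hj
        simp [this, hj]
    rw [Finset.sum_congr rfl (fun j _ => hterm j), Finset.sum_sub_distrib]
    rw [Finset.sum_ite_eq' Finset.univ m (fun _ => g⁻¹ k m * g m l)]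
    simp [← Matrix.mul_apply, hgg']
  -- abbreviations
  set A : Prop := g⁻¹ m m = 0 with hAdef
  set B : Prop := ∀ l : Fin n, (l : ℕ) < n - 1 → g m l = 0 with hBdef
  -- Hessenberg membership characterization
  have hess_iff : (g⁻¹ * X * g ∈ HessSpace h) ↔ ∀ l : Fin n, (l : ℕ) < n - 1 → g⁻¹ m m * g m l = 0 := by
    constructor
    · intro H l hl
      have hml : m ≠ l := fun e => by rw [← e, hmv] at hl; omega
      have := H m l (by rw [hh, if_pos hl, hmv]; omega)
      rw [key, Matrix.one_apply_ne hml] at this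
      rw [zero_sub, neg_eq_zero] at this
      exact this
    · intro H k l hkl
      rw [hh] at hkl
      by_cases hl : (l : ℕ) < n - 1
      · simp only [hl, if_pos] at hkl
        have hk : k = m := Fin.ext (by rw [hmv]; have := k.isLt; omega)
        subst hk
        have hml : m ≠ l := fun e => by rw [← e, hmv] at hl; omega
        rw [key, Matrix.one_apply_ne hml, H l hl, zero_sub, neg_zero]
      · simp only [hl, if_neg, not_false_iff] at hkl
        have := k.isLt; omega
  have hess_iff2 : (g⁻¹ * X * g ∈ HessSpace h) ↔ A ∨ B := by
    rw [hess_iff]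
    constructor
    · intro H
      by_cases hA : A
      · exact Or.inl hA
      · refine Or.inr (fun l hl => ?_)
        rcases mul_eq_zero.mp (H l hl) with h0 | h0
        · exact absurd h0 hA
        · exact h0
    · rintro (hA | hB) l hl
      · rw [hA, zero_mul]
      · rw [hB l hl, mul_zero]
  -- membership of single vectors in V
  have single_mem : ∀ i : Fin n, g⁻¹ m i = 0 → (Pi.single i 1 : Fin n → ℂ) ∈ V := by
    intro i hi
    have heq : (Pi.single i 1 : Fin n → ℂ) = ∑ l : Fin n, g⁻¹ l i • (fun k => g k l) := by
      funext k
      rw [Finset.sum_apply]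
      have : ∀ l : Fin n, (g⁻¹ l i • (fun k => g k l)) k = g k l * g⁻¹ l i := by
        intro l; simp [mul_comm]
      rw [Finset.sum_congr rfl (fun l _ => this l), ← Matrix.mul_apply, hgg]
      rw [Matrix.one_apply, Pi.single_apply]
    rw [heq]
    refine Submodule.sum_mem V (fun l _ => ?_)
    by_cases hl : (l : ℕ) < n - 1
    · exact Submodule.smul_mem V _ (by rw [hV]; exact Submodule.subset_span ⟨l, hl, rfl⟩)
    · have hlm : l = m := by
        by_contra hc
        exact hl ((hlt_iff l).mpr hc)
      rw [hlm, hi, zero_smul]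
      exact Submodule.zero_mem V
  -- (a) ↔ A
  have a_iff : ((Pi.single m 1 : Fin n → ℂ) ∈ V) ↔ A := by
    constructor
    · intro hmem
      have hVle : V ≤ LinearMap.ker
          ((LinearMap.proj m : ((Fin n → ℂ) →ₗ[ℂ] ℂ)).comp (Matrix.mulVecLin g⁻¹)) := by
        rw [hV, Submodule.span_le]
        rintro v ⟨l, hl, rfl⟩
        have hml : m ≠ l := fun e => by rw [← e, hmv] at hl; omega
        simp only [SetLike.mem_coe, LinearMap.mem_ker, LinearMap.comp_apply,
          Matrix.mulVecLin_apply, LinearMap.proj_apply]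
        show (g⁻¹ *ᵥ (fun k => g k l)) m = 0
        rw [Matrix.mulVec]
        show ∑ j, g⁻¹ m j * g j l = 0
        rw [← Matrix.mul_apply, hgg', Matrix.one_apply_ne hml]
      have := hVle hmem
      simp only [LinearMap.mem_ker, LinearMap.comp_apply, Matrix.mulVecLin_apply,
        LinearMap.proj_apply, Matrix.mulVec, dotProduct, Pi.single_apply,
        mul_ite, mul_one, mul_zero, Finset.sum_ite_eq', Finset.mem_univ, if_true] at this
      exact this
    · exact single_mem m
  -- (b) ↔ B
  have b_iff : (V = Submodule.span ℂ
      {v : Fin n → ℂ | ∃ l : Fin n, (l : ℕ) < n - 1 ∧ v = Pi.single l 1}) ↔ B := by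
    constructor
    · intro hVW l hl
      have hcol : (fun k => g k l) ∈ V := by
        rw [hV]; exact Submodule.subset_span ⟨l, hl, rfl⟩
      rw [hVW] at hcol
      have hle : Submodule.span ℂ
          {v : Fin n → ℂ | ∃ l : Fin n, (l : ℕ) < n - 1 ∧ v = Pi.single l 1}
          ≤ LinearMap.ker (LinearMap.proj m : ((Fin n → ℂ) →ₗ[ℂ] ℂ)) := by
        rw [Submodule.span_le]
        rintro v ⟨i, hi, rfl⟩
        have him : m ≠ i := fun e => by rw [← e, hmv] at hi; omega
        simp only [SetLike.mem_coe, LinearMap.mem_ker, LinearMap.proj_apply]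
        exact Pi.single_eq_of_ne him 1
      have := hle hcol
      simpa using this
    · intro hB
      have hgmm : g m m ≠ 0 := by
        intro h0
        have hz : (g * g⁻¹) m m = 0 := by
          rw [Matrix.mul_apply]
          refine Finset.sum_eq_zero (fun j _ => ?_)
          by_cases hj : (j : ℕ) < n - 1
          · rw [hB j hj, zero_mul]
          · have hjm : j = m := by by_contra hc; exact hj ((hlt_iff j).mpr hc)
            rw [hjm, h0, zero_mul]
        rw [hgg, Matrix.one_apply_eq] at hz
        exact one_ne_zero hz
      have hginv0 : ∀ i : Fin n, (i : ℕ) < n - 1 → g⁻¹ m i = 0 := by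
        intro i hi
        have hmi : m ≠ i := fun e => by rw [← e, hmv] at hi; omega
        have h1 : (g * g⁻¹) m i = g m m * g⁻¹ m i := by
          rw [Matrix.mul_apply]
          refine Finset.sum_eq_single m (fun j _ hjm => ?_) (by simp)
          rw [hB j ((hlt_iff j).mpr hjm), zero_mul]
        rw [hgg, Matrix.one_apply_ne hmi] at h1
        exact (mul_eq_zero.mp h1.symm).resolve_left hgmm
      apply le_antisymm
      · rw [hV, Submodule.span_le]
        rintro v ⟨l, hl, rfl⟩
        have hdecomp : (fun k => g k l) = ∑ i : Fin n, g i l • (Pi.single i 1 : Fin n → ℂ) := by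
          funext k
          rw [Finset.sum_apply]
          have : ∀ i : Fin n, (g i l • (Pi.single i 1 : Fin n → ℂ)) k
              = if k = i then g i l else 0 := by
            intro i
            rw [Pi.smul_apply, Pi.single_apply, smul_eq_mul, mul_ite, mul_one, mul_zero]
          rw [Finset.sum_congr rfl (fun i _ => this i)]
          simp
        simp only [SetLike.mem_coe]
        rw [hdecomp]
        refine Submodule.sum_mem _ (fun i _ => ?_)
        by_cases hi : (i : ℕ) < n - 1
        · exact Submodule.smul_mem _ _ (Submodule.subset_span ⟨i, hi, rfl⟩)
        · have him : i = m := by by_contra hc; exact hi ((hlt_iff i).mpr hc)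
          rw [him, hB l hl, zero_smul]
          exact Submodule.zero_mem _
      · rw [Submodule.span_le]
        rintro v ⟨i, hi, rfl⟩
        exact single_mem i (hginv0 i hi)
  -- A and B cannot both hold
  have notAB : ¬(A ∧ B) := by
    rintro ⟨hA, hB⟩
    have hz : (g * g⁻¹) m m = 0 := by
      rw [Matrix.mul_apply]
      refine Finset.sum_eq_zero (fun j _ => ?_)
      by_cases hj : (j : ℕ) < n - 1
      · rw [hB j hj, zero_mul]
      · have hjm : j = m := by by_contra hc; exact hj ((hlt_iff j).mpr hc)
        rw [hjm, hA, mul_zero]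
    rw [hgg, Matrix.one_apply_eq] at hz
    exact one_ne_zero hz
  have hsingle : (Pi.single (⟨n - 1, by omega⟩ : Fin n) 1 : Fin n → ℂ) = Pi.single m 1 := rfl
  constructor
  · rw [hess_iff2, hsingle]
    constructor
    · rintro (hA | hB)
      · exact Or.inl ⟨a_iff.mpr hA, fun hb => notAB ⟨hA, b_iff.mp hb⟩⟩
      · exact Or.inr ⟨b_iff.mpr hB, fun ha => notAB ⟨a_iff.mp ha, hB⟩⟩
    · rintro (⟨ha, -⟩ | ⟨hb, -⟩)
      · exact Or.inl (a_iff.mp ha)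
      · exact Or.inr (b_iff.mp hb)
  · rintro ⟨ha, hb⟩
    rw [hsingle] at ha
    exact notAB ⟨a_iff.mp ha, b_iff.mp hb⟩
end
end

section
/- Let n ≥ 2 and fix i ≠ j with 1 ≤ i, j ≤ n. Let s be a permutation of {1,…,n} with s⁻¹(1) ≤ i and s⁻¹(n) ≥ j, and suppose l = s⁻¹(n) > j and that it is not the case that (s⁻¹(1) = l−1 and l−1 = i). Then s·s_{l−1,l} > s in the Bruhat order, and the permutation s′ = s·s_{l−1,l} still satisfies s′⁻¹(1) ≤ i and s′⁻¹(n) ≥ j. (Here s_{l−1,l} is the transposition exchanging l−1 and l, applied first.) -/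
open Matrix

noncomputable section

private lemma swap_lt_of_adj {n : ℕ} {a b : Fin n} (hab : (a : ℕ) + 1 = (b : ℕ))
    {p q : Fin n} (hpq : p < q) (hne : ¬(p = a ∧ q = b)) :
    Equiv.swap a b p < Equiv.swap a b q := by
  by_cases hpa : p = a
  · subst hpa
    have hqb : q ≠ b := fun h => hne ⟨rfl, h⟩
    have hqa : q ≠ p := ne_of_gt hpq
    rw [Equiv.swap_apply_left, Equiv.swap_apply_of_ne_of_ne hqa hqb]
    have h1 : (q : ℕ) ≠ (b : ℕ) := fun h => hqb (Fin.ext h)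
    rw [Fin.lt_def] at hpq ⊢
    omega
  · by_cases hpb : p = b
    · subst hpb
      have hqb : q ≠ p := ne_of_gt hpq
      have hqa : q ≠ a := by
        intro h; subst h
        rw [Fin.lt_def] at hpq; omega
      rw [Equiv.swap_apply_right, Equiv.swap_apply_of_ne_of_ne hqa hqb]
      rw [Fin.lt_def] at hpq ⊢
      omega
    · by_cases hqa : q = a
      · subst hqa
        rw [Equiv.swap_apply_left, Equiv.swap_apply_of_ne_of_ne hpa hpb]
        rw [Fin.lt_def] at hpq ⊢
        omega
      · by_cases hqb : q = b
        · subst hqb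
          have h1 : (p : ℕ) ≠ (a : ℕ) := fun h => hpa (Fin.ext h)
          rw [Equiv.swap_apply_right, Equiv.swap_apply_of_ne_of_ne hpa hpb]
          rw [Fin.lt_def] at hpq ⊢
          omega
        · rw [Equiv.swap_apply_of_ne_of_ne hpa hpb, Equiv.swap_apply_of_ne_of_ne hqa hqb]
          exact hpq

private lemma invLen_mul_swap_adj {n : ℕ} (w : Equiv.Perm (Fin n)) {a b : Fin n}
    (hab : (a : ℕ) + 1 = (b : ℕ)) (hw : w a < w b) :
    invLen (w * Equiv.swap a b) = invLen w + 1 := by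
  set σ := Equiv.swap a b with hσ
  have hσσ : ∀ x, σ (σ x) = x := fun x => Equiv.swap_apply_self a b x
  have hmul : ∀ x, (w * σ) x = w (σ x) := fun x => rfl
  have key : (Finset.univ.filter
        (fun p : Fin n × Fin n => p.1 < p.2 ∧ (w * σ) p.2 < (w * σ) p.1))
      = insert (a, b) ((Finset.univ.filter
        (fun p : Fin n × Fin n => p.1 < p.2 ∧ w p.2 < w p.1)).image (Prod.map σ σ)) := by
    ext ⟨p, q⟩
    simp only [Finset.mem_insert, Finset.mem_image, Finset.mem_filter, Finset.mem_univ,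
      true_and, Prod.mk.injEq, Prod.exists, Prod.map, hmul]
    constructor
    · rintro ⟨hpq, hinv⟩
      by_cases h : p = a ∧ q = b
      · exact Or.inl ⟨h.1, h.2⟩
      · refine Or.inr ⟨σ p, σ q, ⟨swap_lt_of_adj hab hpq h, hinv⟩, hσσ p, hσσ q⟩
    · rintro (⟨hp, hq⟩ | ⟨u, v, ⟨huv, hinv⟩, hu, hv⟩)
      · subst hp; subst hq
        refine ⟨by rw [Fin.lt_def]; omega, ?_⟩
        rwa [Equiv.swap_apply_left, Equiv.swap_apply_right]
      · subst hu; subst hv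
        have hne : ¬(u = a ∧ v = b) := by
          rintro ⟨rfl, rfl⟩; exact absurd hinv (not_lt.mpr (le_of_lt hw))
        exact ⟨swap_lt_of_adj hab huv hne, by rwa [hσσ, hσσ]⟩
  have hnotmem : (a, b) ∉ (Finset.univ.filter
        (fun p : Fin n × Fin n => p.1 < p.2 ∧ w p.2 < w p.1)).image (Prod.map σ σ) := by
    simp only [Finset.mem_image, Finset.mem_filter, Finset.mem_univ, true_and,
      Prod.exists, Prod.map, Prod.mk.injEq]
    rintro ⟨u, v, ⟨huv, -⟩, hu, hv⟩
    have : u = b := by rw [← hσσ u, hu, hσ, Equiv.swap_apply_left]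
    have : v = a := by rw [← hσσ v, hv, hσ, Equiv.swap_apply_right]
    subst this; subst ‹u = b›
    rw [Fin.lt_def] at huv; omega
  have hinj : Function.Injective (Prod.map σ σ : Fin n × Fin n → Fin n × Fin n) :=
    Function.Injective.prodMap σ.injective σ.injective
  rw [invLen, key, Finset.card_insert_of_notMem hnotmem,
    Finset.card_image_of_injective _ hinj, invLen, Nat.add_comm]

/-- suppose `s⁻¹(1) ≤ i`, `s⁻¹(n) ≥ j`, `l := s⁻¹(n) > j`, and it is not
the case that `s⁻¹(1) = l−1` and `l−1 = i` (all 1-based).  Then `s·s_{l−1,l} > s` in the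
Bruhat order, and `s′ = s·s_{l−1,l}` still satisfies `s′⁻¹(1) ≤ i` and `s′⁻¹(n) ≥ j`.
Here positions are 0-based: `i0 = i−1`, `j0 = j−1`, `l0 = l−1` (as `Fin n` elements),
and the transposition `s_{l−1,l}` becomes `swap ⟨l0−1⟩ l0`.  The 1-based condition
`s⁻¹(1) = l−1 ∧ l−1 = i` becomes `(s⁻¹ ⟨0⟩ : ℕ) = l0 − 1 ∧ (l0 : ℕ) = i0 + 1`. -/
theorem stmt17 (n : ℕ) (hn : 2 ≤ n) (i0 j0 : Fin n) (hij : i0 ≠ j0)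
    (s : Equiv.Perm (Fin n))
    (h1 : s⁻¹ ⟨0, by omega⟩ ≤ i0) (h2 : j0 ≤ s⁻¹ ⟨n - 1, by omega⟩)
    (l0 : Fin n) (hl0 : l0 = s⁻¹ ⟨n - 1, by omega⟩) (hlj : j0 < l0)
    (hne : ¬(((s⁻¹ ⟨0, by omega⟩ : Fin n) : ℕ) = (l0 : ℕ) - 1 ∧ (l0 : ℕ) = (i0 : ℕ) + 1)) :
    BruhatLT s
      (s * Equiv.swap (⟨(l0 : ℕ) - 1, by exact lt_of_le_of_lt (Nat.sub_le _ _) l0.isLt⟩ :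
        Fin n) l0) ∧
    (s * Equiv.swap (⟨(l0 : ℕ) - 1, by exact lt_of_le_of_lt (Nat.sub_le _ _) l0.isLt⟩ :
        Fin n) l0)⁻¹ ⟨0, by omega⟩ ≤ i0 ∧
    j0 ≤ (s * Equiv.swap (⟨(l0 : ℕ) - 1, by exact lt_of_le_of_lt (Nat.sub_le _ _) l0.isLt⟩ :
        Fin n) l0)⁻¹ ⟨n - 1, by omega⟩ := by
  
  have p0 : 0 < n := Nat.lt_of_lt_of_le Nat.zero_lt_two hn
  have p1 : n - 1 < n := Nat.sub_lt (Nat.lt_of_lt_of_le Nat.zero_lt_two hn) Nat.one_pos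
  have pa : (l0 : ℕ) - 1 < n := lt_of_le_of_lt (Nat.sub_le _ _) l0.isLt
  have h1' : s⁻¹ ⟨0, p0⟩ ≤ i0 := h1
  have h2' : j0 ≤ s⁻¹ ⟨n - 1, p1⟩ := h2
  have hl0' : l0 = s⁻¹ ⟨n - 1, p1⟩ := hl0
  have hne₂ : ¬(((s⁻¹ ⟨0, p0⟩ : Fin n) : ℕ) = (l0 : ℕ) - 1 ∧ (l0 : ℕ) = (i0 : ℕ) + 1) := hne
  clear h1 h2 hl0 hne
  show BruhatLT s (s * Equiv.swap (⟨(l0 : ℕ) - 1, pa⟩ : Fin n) l0) ∧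
    (s * Equiv.swap (⟨(l0 : ℕ) - 1, pa⟩ : Fin n) l0)⁻¹ ⟨0, p0⟩ ≤ i0 ∧
    j0 ≤ (s * Equiv.swap (⟨(l0 : ℕ) - 1, pa⟩ : Fin n) l0)⁻¹ ⟨n - 1, p1⟩
  have hl1 : 1 ≤ (l0 : ℕ) := by
    have := hlj; rw [Fin.lt_def] at this; omega
  set a : Fin n := (⟨(l0 : ℕ) - 1, pa⟩ : Fin n) with ha
  have hab : (a : ℕ) + 1 = (l0 : ℕ) := by
    rw [ha]; exact Nat.succ_pred_eq_of_pos hl1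
  have hsl : s l0 = ⟨n - 1, p1⟩ := by rw [hl0']; exact Equiv.apply_symm_apply s _
  have hane : a ≠ l0 := by
    intro h; rw [Fin.ext_iff] at h; omega
  have hw : s a < s l0 := by
    rw [hsl]
    have hlt : (s a : ℕ) < n := (s a).isLt
    have h2'' : s a ≠ ⟨n - 1, p1⟩ := by
      rw [← hsl]; exact fun h => hane (s.injective h)
    have h3 : (s a : ℕ) ≠ n - 1 := fun h => h2'' (Fin.ext h)
    rw [Fin.lt_def]
    show (s a : ℕ) < n - 1
    omega
  have hinvinv : (s * Equiv.swap a l0)⁻¹ = Equiv.swap a l0 * s⁻¹ := by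
    rw [_root_.mul_inv_rev, Equiv.swap_inv]
  have hlen : invLen (s * Equiv.swap a l0) = invLen s + 1 := invLen_mul_swap_adj s hab hw
  have hne' : s ≠ s * Equiv.swap a l0 := by
    intro h
    have h0 : s l0 = (s * Equiv.swap a l0) l0 := by rw [← h]
    rw [Equiv.Perm.mul_apply, Equiv.swap_apply_right] at h0
    exact absurd hw (by rw [← h0]; exact lt_irrefl _)
  have hcov : BruhatCovers (s * Equiv.swap a l0) s :=
    ⟨⟨Equiv.swap a l0, ⟨a, l0, hane, rfl⟩,
      by rw [mul_assoc, Equiv.swap_mul_self, mul_one]⟩, hlen.symm⟩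
  have hle : BruhatLE s (s * Equiv.swap a l0) := Relation.ReflTransGen.single hcov
  refine ⟨⟨hle, hne'⟩, ?_, ?_⟩
  · rw [hinvinv, Equiv.Perm.mul_apply]
    by_cases hca : s⁻¹ (⟨0, p0⟩ : Fin n) = a
    · rw [hca, Equiv.swap_apply_left]
      have h1'' := h1'; rw [Fin.le_def] at h1''
      have hcl : ((s⁻¹ (⟨0, p0⟩ : Fin n) : Fin n) : ℕ) = (l0 : ℕ) - 1 := by rw [hca]
      have hni : (l0 : ℕ) ≠ (i0 : ℕ) + 1 := fun h => hne₂ ⟨hcl, h⟩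
      rw [Fin.le_def]; omega
    · have hcb : s⁻¹ (⟨0, p0⟩ : Fin n) ≠ l0 := by
        intro h
        have hsl0 : s l0 = ⟨0, p0⟩ := by rw [← h]; exact Equiv.apply_symm_apply s _
        rw [hsl, Fin.ext_iff] at hsl0
        simp only [Fin.val_mk] at hsl0 ⊢
        omega
      rw [Equiv.swap_apply_of_ne_of_ne hca hcb]
      exact h1'
  · rw [hinvinv, Equiv.Perm.mul_apply, ← hl0', Equiv.swap_apply_right]
    rw [Fin.le_def]
    have hj := hlj; rw [Fin.lt_def] at hj
    show (j0 : ℕ) ≤ (l0 : ℕ) - 1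
    omega
end
end
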